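/- Let G = (V, E) be a cubic graph and let (X, Y) be the corresponding instance of MLA. For every edge {v_i, v_j} ∈ E and every feasible labeling of (X, Y), if no substring of B_X-VE(e_{i,j}) is labeled by a duplication coming from B_X-VE(v_i) or from B_X-VE(v_j), then the total cost of the operations labeling the unmatched characters of B_X-VE(e_{i,j}) is at least 3. -/

import Mathlib

namespace MLA

/-! ### Generic labelings of aligned genomes -/

/-- An operation labeling a substring of the genome `X`: the substring of length
`len` starting at position `start`; `src = none` means a loss, `src = some s`
means a duplication coming from the identical occurrence starting at `s`. -/
structure Op where
  start : ℕ
  len : ℕ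
  src : Option ℕ
deriving DecidableEq

/-- Cost of an operation: a duplication costs `1`, a loss of length `z` costs `z`. -/
def Op.cost (o : Op) : ℕ := if o.src = none then o.len else 1

/-- The positions covered by (the target substring of) an operation. -/
def Op.covers (o : Op) (p : ℕ) : Prop := o.start ≤ p ∧ p < o.start + o.len

instance (o : Op) (p : ℕ) : Decidable (o.covers p) := by
  unfold Op.covers; infer_instance

/-- Validity of an operation with respect to the genome `X`: nonempty target
inside `X`, and a duplication comes from a different occurrence in `X` of a
string identical to its target substring. -/
def Op.valid {α : Type*} (X : List α) (o : Op) : Prop :=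
  1 ≤ o.len ∧ o.start + o.len ≤ X.length ∧
    ∀ s, o.src = some s → s ≠ o.start ∧ s + o.len ≤ X.length ∧
      ∀ t < o.len, X[s + t]? = X[o.start + t]?

/-- A duplication from occurrence `s` to occurrence `t` is maximal if the
characters immediately to the left of `s` and `t` differ (or one does not
exist) and likewise on the right. -/
def Op.maximalDup {α : Type*} (X : List α) (o : Op) : Prop :=
  ∃ s, o.src = some s ∧
    (s = 0 ∨ o.start = 0 ∨ X[s - 1]? ≠ X[o.start - 1]?) ∧
    (X[s + o.len]? = none ∨ X[o.start + o.len]? = none ∨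
      X[s + o.len]? ≠ X[o.start + o.len]?)

/-- `L` is a labeling of the set `U` of unmatched positions of the genome `X`:
the target substrings of its operations are valid and partition `U`. -/
structure IsLabeling {α : Type*} (X : List α) (U : ℕ → Prop) (L : Finset Op) :
    Prop where
  valid : ∀ o ∈ L, o.valid X
  unmatched : ∀ o ∈ L, ∀ p, o.covers p → U p
  covers : ∀ p, U p → ∃ o ∈ L, o.covers p
  disjoint : ∀ o ∈ L, ∀ o' ∈ L, ∀ p, o.covers p → o'.covers p → o = o'

/-- Arc of the duplication graph of a labeling: from the operation owning part
of the source occurrence of a duplication to the duplication itself. -/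
def dupArc (L : Finset Op) (o o' : Op) : Prop :=
  o ∈ L ∧ o' ∈ L ∧ ∃ s, o'.src = some s ∧ ∃ p, o.covers p ∧ s ≤ p ∧ p < s + o'.len

/-- A labeling is feasible if its duplication graph has no cycle. -/
def Feasible (L : Finset Op) : Prop := ∀ o, ¬ Relation.TransGen (dupArc L) o o

/-- Cost of a labeling. -/
def cost (L : Finset Op) : ℕ := ∑ o ∈ L, o.cost

/-- The operations of `L` labeling some position in `[lo, hi)`. -/
def restrict (L : Finset Op) (lo hi : ℕ) : Finset Op :=
  L.filter fun o => ∃ p ∈ Finset.Ico lo hi, o.covers p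

/-- The total cost of the operations of `L` labeling positions in `[lo, hi)`. -/
def blockCost (L : Finset Op) (lo hi : ℕ) : ℕ := cost (restrict L lo hi)

/-! ### The reduction from Minimum Vertex Cover on cubic graphs -/

/-- The alphabet of the reduction (all symbols are pairwise distinct). -/
inductive Sym (n : ℕ) : Type
  | s  (i : Fin n)
  | se (i j : Fin n)
  | x  (i : Fin n) (p : ℕ)
  | e  (i j : Fin n) (t : Fin 2)
  | z  (i : Fin n) (t : Fin 8)
  | w  (i : Fin n) (t : Fin 4)
  | u  (i : Fin n) (t : Fin 6)
deriving DecidableEq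

variable {n : ℕ} (G : SimpleGraph (Fin n)) [DecidableRel G.Adj]

/-- The edges of `G` as pairs `(i, j)` with `i < j`, in lexicographic order. -/
def edgePairs : List (Fin n × Fin n) :=
  (List.finRange n).flatMap fun i =>
    ((List.finRange n).filter fun j => decide (i < j ∧ G.Adj i j)).map fun j => (i, j)

/-- The edges incident to `i`, in edge order. -/
def incEdges (i : Fin n) : List (Fin n × Fin n) :=
  (edgePairs G).filter fun e => decide (e.1 = i ∨ e.2 = i)

/-- The `t`-th (`0`-based) edge incident to `i`. -/
def nthInc (i : Fin n) (t : ℕ) : Fin n × Fin n := (incEdges G i).getD t (i, i)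

/-- The `0`-based index of edge `e` among the edges incident to `i`. -/
def edgeIdx (i : Fin n) (e : Fin n × Fin n) : ℕ := (incEdges G i).idxOf e

/-- Left part of the `i`-encoding of edge `e`. -/
def encL (i : Fin n) (e : Fin n × Fin n) : List (Sym n) :=
  if i = e.1 then [.x i (edgeIdx G i e)] else [.e e.1 e.2 0, .e e.1 e.2 1]

/-- Right part of the `i`-encoding of edge `e`. -/
def encR (i : Fin n) (e : Fin n × Fin n) : List (Sym n) :=
  if i = e.1 then [.e e.1 e.2 0, .e e.1 e.2 1] else [.x i (edgeIdx G i e)]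

/-- The `i`-encoding of edge `e`. -/
def enc (i : Fin n) (e : Fin n × Fin n) : List (Sym n) := encL G i e ++ encR G i e

/-- Block `B_{X-VE}(e)`. -/
def edgeBlockX (e : Fin n × Fin n) : List (Sym n) :=
  [.se e.1 e.2, .x e.1 (edgeIdx G e.1 e), .e e.1 e.2 0, .e e.1 e.2 1,
   .x e.2 (edgeIdx G e.2 e)]

/-- Block `B_{X-VE}(v_i)`. -/
def vertexBlockX (i : Fin n) : List (Sym n) :=
  [.s i, .z i 0, .z i 1] ++ enc G i (nthInc G i 0) ++
  [.z i 2, .z i 3] ++ enc G i (nthInc G i 1) ++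
  [.z i 4, .z i 5] ++ enc G i (nthInc G i 2) ++
  [.z i 6, .z i 7]

/-- Block `B_{X,A,1}(v_i) = B_{Y,A,1}(v_i)`. -/
def A1Block (i : Fin n) : List (Sym n) :=
  [.w i 0, .z i 0, .z i 1, .w i 1, .z i 2, .z i 3,
   .w i 2, .z i 4, .z i 5, .w i 3, .z i 6, .z i 7]

/-- Block `B_{X,A,2}(v_i) = B_{Y,A,2}(v_i)`. -/
def A2Block (i : Fin n) : List (Sym n) :=
  [.u i 0, .z i 1] ++ encL G i (nthInc G i 0) ++ [.u i 1] ++ encR G i (nthInc G i 0) ++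
  [.z i 2, .u i 2, .z i 3] ++ encL G i (nthInc G i 1) ++ [.u i 3] ++ encR G i (nthInc G i 1) ++
  [.z i 4, .u i 4, .z i 5] ++ encL G i (nthInc G i 2) ++ [.u i 5] ++ encR G i (nthInc G i 2) ++
  [.z i 6]

/-- The genome `X` corresponding to the cubic graph `G`. -/
def genomeX : List (Sym n) :=
  ((List.finRange n).flatMap fun i => vertexBlockX G i) ++
  ((edgePairs G).flatMap fun e => edgeBlockX G e) ++
  ((List.finRange n).flatMap fun i => A1Block i ++ A2Block G i)

/-- The aligned genome `Y` (`none` denotes a gap). -/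
def alignedY : List (Option (Sym n)) :=
  ((List.finRange n).flatMap fun i => some (.s i) :: List.replicate 17 none) ++
  ((edgePairs G).flatMap fun e => some (.se e.1 e.2) :: List.replicate 4 none) ++
  ((List.finRange n).flatMap fun i => (A1Block i ++ A2Block G i).map some)

/-- The unmatched positions of `X` (those aligned with a gap of `Y`). -/
def UnmatchedX (p : ℕ) : Prop := (alignedY G)[p]? = some none

/-- Start position of `B_{X-VE}(v_i)` in `X`. -/
def vStart (i : Fin n) : ℕ := 18 * i.val

/-- Start position of `B_{X-VE}(e)` in `X`. -/
def eStart (e : Fin n × Fin n) : ℕ := 18 * n + 5 * (edgePairs G).idxOf e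

/-- Start position of `B_{X,A,1}(v_i)` in `X` (`B_{X,A,2}(v_i)` starts 12 later). -/
def aStart (i : Fin n) : ℕ := 18 * n + 5 * (edgePairs G).length + 33 * i.val

/-- Offset of the `i`-encoding inside `B_{X-VE}(e)`. -/
def encOff (i : Fin n) (e : Fin n × Fin n) : ℕ := if i = e.1 then 1 else 2

/-- The type-a labeling of `B_{X-VE}(v_i)`: four duplications coming from
`B_{X,A,1}(v_i)` (for the pairs of `z`-symbols) and three duplications coming
from the blocks of the three edges incident to `v_i` (for the encodings). -/
def typeA (i : Fin n) : Finset Op :=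
  { ⟨vStart i + 1, 2, some (aStart G i + 1)⟩,
    ⟨vStart i + 6, 2, some (aStart G i + 4)⟩,
    ⟨vStart i + 11, 2, some (aStart G i + 7)⟩,
    ⟨vStart i + 16, 2, some (aStart G i + 10)⟩,
    ⟨vStart i + 3, 3, some (eStart G (nthInc G i 0) + encOff i (nthInc G i 0))⟩,
    ⟨vStart i + 8, 3, some (eStart G (nthInc G i 1) + encOff i (nthInc G i 1))⟩,
    ⟨vStart i + 13, 3, some (eStart G (nthInc G i 2) + encOff i (nthInc G i 2))⟩ }

/-- The type-b labeling of `B_{X-VE}(v_i)`: six duplications coming from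
`B_{X,A,2}(v_i)` and two losses of length one (for `z_{i,1}` and `z_{i,8}`). -/
def typeB (i : Fin n) : Finset Op :=
  let a := aStart G i + 12
  let l1 := (encL G i (nthInc G i 0)).length
  let l2 := (encL G i (nthInc G i 1)).length
  let l3 := (encL G i (nthInc G i 2)).length
  { ⟨vStart i + 1, 1, none⟩,
    ⟨vStart i + 17, 1, none⟩,
    ⟨vStart i + 2, 1 + l1, some (a + 1)⟩,
    ⟨vStart i + 3 + l1, 4 - l1, some (a + 3 + l1)⟩,
    ⟨vStart i + 7, 1 + l2, some (a + 8)⟩,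
    ⟨vStart i + 8 + l2, 4 - l2, some (a + 10 + l2)⟩,
    ⟨vStart i + 12, 1 + l3, some (a + 15)⟩,
    ⟨vStart i + 13 + l3, 4 - l3, some (a + 17 + l3)⟩ }

/-- The cost-2 labeling of `B_{X-VE}(e)` using a duplication coming from
`B_{X-VE}(v_i)` (where `i = e.1`) and a loss for the last character. -/
def edgeLabA (e : Fin n × Fin n) : Finset Op :=
  { ⟨eStart G e + 1, 3, some (vStart e.1 + 3 + 5 * edgeIdx G e.1 e)⟩,
    ⟨eStart G e + 4, 1, none⟩ }

/-- The cost-2 labeling of `B_{X-VE}(e)` using a duplication coming from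
`B_{X-VE}(v_j)` (where `j = e.2`) and a loss for the second character. -/
def edgeLabB (e : Fin n × Fin n) : Finset Op :=
  { ⟨eStart G e + 2, 3, some (vStart e.2 + 3 + 5 * edgeIdx G e.2 e)⟩,
    ⟨eStart G e + 1, 1, none⟩ }

/-- `C` is a vertex cover of `G`. -/
def IsVC (C : Finset (Fin n)) : Prop := ∀ ⦃u v : Fin n⦄, G.Adj u v → u ∈ C ∨ v ∈ C

end MLA

set_option maxRecDepth 1024
namespace MLA

lemma getElem?_flatMap_const {α β : Type*} (L : ℕ) (hL : 0 < L)
    (f : β → List α) (l : List β) (hf : ∀ b ∈ l, (f b).length = L) (q : ℕ) :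
    (l.flatMap f)[q]? = l[q / L]?.bind (fun b => (f b)[q % L]?) := by
  induction l generalizing q with
  | nil => simp
  | cons b l ih =>
    rw [List.flatMap_cons, List.getElem?_append]
    have hb : (f b).length = L := hf b (by simp)
    by_cases h : q < L
    · rw [if_pos (by omega), Nat.div_eq_of_lt h, Nat.mod_eq_of_lt h]
      simp
    · have h1 : q / L = (q - L) / L + 1 := Nat.div_eq_sub_div hL (by omega)
      have h2 : q % L = (q - L) % L := Nat.mod_eq_sub_mod (by omega)
      rw [if_neg (by omega), hb, ih (fun b hb => hf b (by simp [hb])) (q - L), h1, h2]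
      simp

lemma length_flatMap_const {α β : Type*} (L : ℕ)
    (f : β → List α) (l : List β) (hf : ∀ b ∈ l, (f b).length = L) :
    (l.flatMap f).length = l.length * L := by
  induction l with
  | nil => simp
  | cons b l ih =>
    rw [List.flatMap_cons, List.length_append, hf b (by simp),
      ih (fun b hb => hf b (by simp [hb]))]
    simp [Nat.succ_mul]; omega

variable {n : ℕ} (G : SimpleGraph (Fin n)) [DecidableRel G.Adj]

lemma length_encL (i : Fin n) (e : Fin n × Fin n) :
    (encL G i e).length = if i = e.1 then 1 else 2 := by
  unfold encL; split_ifs <;> rfl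

lemma length_encR (i : Fin n) (e : Fin n × Fin n) :
    (encR G i e).length = if i = e.1 then 2 else 1 := by
  unfold encR; split_ifs <;> rfl

lemma length_enc (i : Fin n) (e : Fin n × Fin n) : (enc G i e).length = 3 := by
  unfold enc encL encR; split_ifs <;> rfl

lemma length_vertexBlockX (i : Fin n) : (vertexBlockX G i).length = 18 := by
  simp [vertexBlockX, length_enc]

lemma length_ABlock (i : Fin n) : (A1Block i ++ A2Block G i).length = 33 := by
  simp [A1Block, A2Block, length_encL, length_encR]
  split_ifs <;> simp

lemma getX (q : ℕ) : (genomeX G)[q]? =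
    if q < 18 * n then
      (List.finRange n)[q / 18]?.bind (fun i => (vertexBlockX G i)[q % 18]?)
    else if q < 18 * n + 5 * (edgePairs G).length then
      (edgePairs G)[(q - 18 * n) / 5]?.bind
        (fun e => (edgeBlockX G e)[(q - 18 * n) % 5]?)
    else
      (List.finRange n)[(q - (18 * n + 5 * (edgePairs G).length)) / 33]?.bind
        (fun i => (A1Block i ++ A2Block G i)[(q - (18 * n + 5 * (edgePairs G).length)) % 33]?) := by
  have hVB : ((List.finRange n).flatMap fun i => vertexBlockX G i).length = 18 * n := by
    rw [length_flatMap_const 18 _ _ (fun b _ => length_vertexBlockX G b)]; simp [Nat.mul_comm]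
  have hEB : ((edgePairs G).flatMap fun e => edgeBlockX G e).length
      = 5 * (edgePairs G).length := by
    rw [length_flatMap_const 5 (fun e => edgeBlockX G e) _ (fun b _ => rfl)]; omega
  unfold genomeX
  rw [List.getElem?_append, List.length_append, hVB, hEB]
  by_cases h1 : q < 18 * n
  · rw [if_pos (by omega), List.getElem?_append, hVB, if_pos h1,
      getElem?_flatMap_const 18 (by omega) _ _ (fun b _ => length_vertexBlockX G b),
      if_pos h1]
  · by_cases h2 : q < 18 * n + 5 * (edgePairs G).length
    · rw [if_pos (by omega), List.getElem?_append, hVB, if_neg h1,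
        getElem?_flatMap_const 5 (by omega) (fun e => edgeBlockX G e) _ (fun b _ => rfl),
        if_neg h1, if_pos h2]
    · rw [if_neg (by omega), if_neg h1, if_neg h2,
        getElem?_flatMap_const 33 (by omega) _ _ (fun b _ => length_ABlock G b)]

lemma getY (q : ℕ) : (alignedY G)[q]? =
    if q < 18 * n then
      (List.finRange n)[q / 18]?.bind
        (fun i => ((some (.s i) : Option (Sym n)) :: List.replicate 17 none)[q % 18]?)
    else if q < 18 * n + 5 * (edgePairs G).length then
      (edgePairs G)[(q - 18 * n) / 5]?.bind
        (fun e => ((some (.se e.1 e.2) : Option (Sym n)) :: List.replicate 4 none)[(q - 18 * n) % 5]?)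
    else
      (List.finRange n)[(q - (18 * n + 5 * (edgePairs G).length)) / 33]?.bind
        (fun i => ((A1Block i ++ A2Block G i).map some)[(q - (18 * n + 5 * (edgePairs G).length)) % 33]?) := by
  have hVB : ((List.finRange n).flatMap fun i =>
      (some (.s i) : Option (Sym n)) :: List.replicate 17 none).length = 18 * n := by
    rw [length_flatMap_const 18 (fun i => (some (.s i) : Option (Sym n)) :: List.replicate 17 none) _ (fun b _ => rfl)]; simp [Nat.mul_comm]
  have hEB : ((edgePairs G).flatMap fun e =>
      (some (.se e.1 e.2) : Option (Sym n)) :: List.replicate 4 none).length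
      = 5 * (edgePairs G).length := by
    rw [length_flatMap_const 5 (fun (e : Fin n × Fin n) => (some (.se e.1 e.2) : Option (Sym n)) :: List.replicate 4 none) _ (fun b _ => rfl)]; omega
  unfold alignedY
  rw [List.getElem?_append, List.length_append, hVB, hEB]
  by_cases h1 : q < 18 * n
  · rw [if_pos (by omega), List.getElem?_append, hVB, if_pos h1,
      getElem?_flatMap_const 18 (by omega) (fun i => (some (.s i) : Option (Sym n)) :: List.replicate 17 none) _ (fun b _ => rfl), if_pos h1]
  · by_cases h2 : q < 18 * n + 5 * (edgePairs G).length
    · rw [if_pos (by omega), List.getElem?_append, hVB, if_neg h1,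
        getElem?_flatMap_const 5 (by omega) (fun (e : Fin n × Fin n) => (some (.se e.1 e.2) : Option (Sym n)) :: List.replicate 4 none) _ (fun b _ => rfl),
        if_neg h1, if_pos h2]
    · rw [if_neg (by omega), if_neg h1, if_neg h2,
        getElem?_flatMap_const 33 (by omega) _ _
          (fun b _ => by rw [List.length_map, length_ABlock])]


lemma indexOf_lt' {a : (Fin n × Fin n)} {l : List (Fin n × Fin n)} (h : a ∈ l) :
    l.idxOf a < l.length := by
  induction l with
  | nil => simp at h
  | cons b l ih =>
    rw [List.idxOf_cons]
    by_cases hb : b = a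
    · simp [hb]
    · have : (b == a) = false := by simp [hb]
      rw [this]
      simp only [cond_false, List.length_cons]
      have : a ∈ l := by
        rcases List.mem_cons.1 h with h' | h'
        · exact absurd h'.symm hb
        · exact h'
      exact Nat.succ_lt_succ (ih this)

lemma getElem?_indexOf' {a : (Fin n × Fin n)} {l : List (Fin n × Fin n)} (h : a ∈ l) :
    l[l.idxOf a]? = some a := by
  induction l with
  | nil => simp at h
  | cons b l ih =>
    rw [List.idxOf_cons]
    by_cases hb : b = a
    · simp [hb]
    · have hb' : (b == a) = false := by simp [hb]
      rw [hb']
      simp only [cond_false, List.getElem?_cons_succ]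
      have : a ∈ l := by
        rcases List.mem_cons.1 h with h' | h'
        · exact absurd h'.symm hb
        · exact h'
      exact ih this

lemma indexOf_of_getElem?' {l : List (Fin n × Fin n)} (hnd : l.Nodup) {k : ℕ} {a : (Fin n × Fin n)}
    (h : l[k]? = some a) : k = l.idxOf a := by
  induction l generalizing k with
  | nil => simp at h
  | cons b l ih =>
    rcases List.nodup_cons.1 hnd with ⟨hb, hnd'⟩
    cases k with
    | zero =>
      simp only [List.getElem?_cons_zero, Option.some_inj] at h
      subst h
      rw [List.idxOf_cons]
      simp
    | succ k =>
      simp only [List.getElem?_cons_succ] at h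
      have ha : a ∈ l := List.mem_of_getElem? h
      have hba : ¬ b = a := fun hh => hb (hh ▸ ha)
      rw [List.idxOf_cons]
      have : (b == a) = false := by simp [hba]
      rw [this]
      simp only [cond_false]
      exact congrArg (· + 1) (ih hnd' h)

lemma nodup_edgePairs : (edgePairs G).Nodup := by
  unfold edgePairs
  rw [List.nodup_flatMap]
  constructor
  · intro i _
    refine List.Nodup.map ?_ (List.Nodup.filter _ (List.nodup_finRange n))
    intro a b h
    simpa using h
  · refine (List.nodup_finRange n).imp ?_
    intro a b hab p hp hq
    simp only [List.mem_map, List.mem_filter] at hp hq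
    obtain ⟨j, -, rfl⟩ := hp
    obtain ⟨j', -, h⟩ := hq
    exact hab (by simpa using congrArg Prod.fst h.symm)

lemma finRange_getElem? {k : ℕ} (h : k < n) :
    (List.finRange n)[k]? = some ⟨k, h⟩ := by
  rw [List.getElem?_eq_getElem (by simpa using h)]
  simp

lemma getX_vblk (i : Fin n) (r : ℕ) (hr : r < 18) :
    (genomeX G)[18 * i.val + r]? = (vertexBlockX G i)[r]? := by
  have hlt : 18 * i.val + r < 18 * n := by have := i.isLt; omega
  have hd : (18 * i.val + r) / 18 = i.val := by omega
  have hm : (18 * i.val + r) % 18 = r := by omega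
  rw [getX, if_pos hlt, hd, hm, finRange_getElem? i.isLt]
  simp

lemma getX_eblk {k : ℕ} (hk : k < (edgePairs G).length) (r : ℕ) (hr : r < 5) :
    (genomeX G)[18 * n + 5 * k + r]? = (edgeBlockX G ((edgePairs G)[k]))[r]? := by
  have hd : (18 * n + 5 * k + r - 18 * n) / 5 = k := by omega
  have hm : (18 * n + 5 * k + r - 18 * n) % 5 = r := by omega
  rw [getX, if_neg (by omega), if_pos (by omega), hd, hm,
    List.getElem?_eq_getElem hk]
  simp

lemma getElem_edgePairs_indexOf {e : Fin n × Fin n} (he : e ∈ edgePairs G)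
    (hk : (edgePairs G).idxOf e < (edgePairs G).length) :
    (edgePairs G)[(edgePairs G).idxOf e]'hk = e := by
  have h := getElem?_indexOf' he
  rwa [List.getElem?_eq_getElem hk, Option.some_inj] at h

lemma getX_estart {e : Fin n × Fin n} (he : e ∈ edgePairs G) (r : ℕ) (hr : r < 5) :
    (genomeX G)[eStart G e + r]? = (edgeBlockX G e)[r]? := by
  have hk : (edgePairs G).idxOf e < (edgePairs G).length := indexOf_lt' he
  have h := getX_eblk G hk r hr
  rw [getElem_edgePairs_indexOf G he hk] at h
  exact h

lemma getX_ablk (i : Fin n) (r : ℕ) (hr : r < 33) :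
    (genomeX G)[18 * n + 5 * (edgePairs G).length + 33 * i.val + r]? =
      (A1Block i ++ A2Block G i)[r]? := by
  have hd : (18 * n + 5 * (edgePairs G).length + 33 * i.val + r
      - (18 * n + 5 * (edgePairs G).length)) / 33 = i.val := by omega
  have hm : (18 * n + 5 * (edgePairs G).length + 33 * i.val + r
      - (18 * n + 5 * (edgePairs G).length)) % 33 = r := by omega
  rw [getX, if_neg (by omega), if_neg (by omega), hd, hm, finRange_getElem? i.isLt]
  simp

lemma vblk_slot (i : Fin n) (m : ℕ) (hm : m < 3) (d : ℕ) (hd : d < 3) :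
    (vertexBlockX G i)[3 + 5 * m + d]? = (enc G i (nthInc G i m))[d]? := by
  have hAl := length_enc G i (nthInc G i 0)
  have hBl := length_enc G i (nthInc G i 1)
  have hCl := length_enc G i (nthInc G i 2)
  unfold vertexBlockX
  interval_cases m <;> interval_cases d <;>
    simp [List.getElem?_append, List.getElem_append, List.length_append, hAl, hBl, hCl]

lemma vblk_z (i : Fin n) (r : ℕ)
    (hr : r = 1 ∨ r = 2 ∨ r = 6 ∨ r = 7 ∨ r = 11 ∨ r = 12 ∨ r = 16 ∨ r = 17) :
    ∃ t, (vertexBlockX G i)[r]? = some (.z i t) := by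
  have hAl := length_enc G i (nthInc G i 0)
  have hBl := length_enc G i (nthInc G i 1)
  have hCl := length_enc G i (nthInc G i 2)
  unfold vertexBlockX
  rcases hr with rfl | rfl | rfl | rfl | rfl | rfl | rfl | rfl
  · exact ⟨0, by simp [List.getElem?_append, List.getElem_append, List.length_append, hAl, hBl, hCl]⟩
  · exact ⟨1, by simp [List.getElem?_append, List.getElem_append, List.length_append, hAl, hBl, hCl]⟩
  · exact ⟨2, by simp [List.getElem?_append, List.getElem_append, List.length_append, hAl, hBl, hCl]⟩
  · exact ⟨3, by simp [List.getElem?_append, List.getElem_append, List.length_append, hAl, hBl, hCl]⟩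
  · exact ⟨4, by simp [List.getElem?_append, List.getElem_append, List.length_append, hAl, hBl, hCl]⟩
  · exact ⟨5, by simp [List.getElem?_append, List.getElem_append, List.length_append, hAl, hBl, hCl]⟩
  · exact ⟨6, by simp [List.getElem?_append, List.getElem_append, List.length_append, hAl, hBl, hCl]⟩
  · exact ⟨7, by simp [List.getElem?_append, List.getElem_append, List.length_append, hAl, hBl, hCl]⟩

lemma vblk_s (i : Fin n) : (vertexBlockX G i)[0]? = some (.s i) := by
  unfold vertexBlockX
  simp [List.getElem?_append]


lemma enc_eq (i : Fin n) (E : Fin n × Fin n) : enc G i E =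
    if i = E.1 then [.x i (edgeIdx G i E), .e E.1 E.2 0, .e E.1 E.2 1]
    else [.e E.1 E.2 0, .e E.1 E.2 1, .x i (edgeIdx G i E)] := by
  unfold enc encL encR; split_ifs <;> rfl

lemma eStart_eq (e : Fin n × Fin n) :
    eStart G e = 18 * n + 5 * (edgePairs G).idxOf e := rfl

lemma unmatched_edge {e : Fin n × Fin n} (he : e ∈ edgePairs G) (r : ℕ)
    (h1 : 1 ≤ r) (hr : r < 5) : UnmatchedX G (eStart G e + r) := by
  have hk : (edgePairs G).idxOf e < (edgePairs G).length := indexOf_lt' he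
  have hE := eStart_eq G e
  unfold UnmatchedX
  rw [getY, if_neg (by omega), if_pos (by omega)]
  have hd : (eStart G e + r - 18 * n) / 5 = (edgePairs G).idxOf e := by omega
  have hm : (eStart G e + r - 18 * n) % 5 = r := by omega
  rw [hd, hm, List.getElem?_eq_getElem hk]
  simp only [Option.bind_some, Option.bind_some]
  obtain ⟨r, rfl⟩ : ∃ r', r = r' + 1 := ⟨r - 1, by omega⟩
  rw [List.getElem?_cons_succ, List.getElem?_replicate, if_pos (by omega)]

lemma matched_eStart {e : Fin n × Fin n} (he : e ∈ edgePairs G) :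
    ¬ UnmatchedX G (eStart G e) := by
  have hk : (edgePairs G).idxOf e < (edgePairs G).length := indexOf_lt' he
  have hE := eStart_eq G e
  unfold UnmatchedX
  rw [getY, if_neg (by omega), if_pos (by omega)]
  have hd : (eStart G e - 18 * n) / 5 = (edgePairs G).idxOf e := by omega
  have hm : (eStart G e - 18 * n) % 5 = 0 := by omega
  rw [hd, hm, List.getElem?_eq_getElem hk]
  simp

lemma matched_eEnd {e : Fin n × Fin n} (he : e ∈ edgePairs G) :
    ¬ UnmatchedX G (eStart G e + 5) := by
  have hk : (edgePairs G).idxOf e < (edgePairs G).length := indexOf_lt' he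
  have hE := eStart_eq G e
  unfold UnmatchedX
  by_cases hk1 : (edgePairs G).idxOf e + 1 < (edgePairs G).length
  · rw [getY, if_neg (by omega), if_pos (by omega)]
    have hd : (eStart G e + 5 - 18 * n) / 5 = (edgePairs G).idxOf e + 1 := by omega
    rw [hd, List.getElem?_eq_getElem hk1]
    have hm : (eStart G e + 5 - 18 * n) % 5 = 0 := by omega
    rw [hm]
    simp
  · rw [getY, if_neg (by omega), if_neg (by omega)]
    have hd : (eStart G e + 5 - (18 * n + 5 * (edgePairs G).length)) / 33 = 0 := by omega
    have hm : (eStart G e + 5 - (18 * n + 5 * (edgePairs G).length)) % 33 = 0 := by omega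
    rw [hd, hm]
    rcases hF : (List.finRange n)[0]? with _ | i
    · simp
    · simp [List.getElem?_map, List.getElem?_append, A1Block]

lemma slotA_len (k : Fin n) (E : Fin n × Fin n) (j : Fin 6) :
    (encL G k E ++ [Sym.u k j] ++ encR G k E).length = 4 := by
  unfold encL encR; split_ifs <;> rfl

lemma slotA_eq (k : Fin n) (E : Fin n × Fin n) (j : Fin 6) :
    encL G k E ++ [Sym.u k j] ++ encR G k E =
      if k = E.1 then
        [.x k (edgeIdx G k E), .u k j, .e E.1 E.2 0, .e E.1 E.2 1]
      else [.e E.1 E.2 0, .e E.1 E.2 1, .u k j, .x k (edgeIdx G k E)] := by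
  unfold encL encR; split_ifs <;> rfl

lemma ablk_eq (k : Fin n) : A1Block k ++ A2Block G k =
    ([Sym.w k 0, .z k 0, .z k 1, .w k 1, .z k 2, .z k 3,
      .w k 2, .z k 4, .z k 5, .w k 3, .z k 6, .z k 7, .u k 0, .z k 1] ++
     (encL G k (nthInc G k 0) ++ [Sym.u k 1] ++ encR G k (nthInc G k 0)) ++
     [Sym.z k 2, .u k 2, .z k 3] ++
     (encL G k (nthInc G k 1) ++ [Sym.u k 3] ++ encR G k (nthInc G k 1)) ++
     [Sym.z k 4, .u k 4, .z k 5] ++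
     (encL G k (nthInc G k 2) ++ [Sym.u k 5] ++ encR G k (nthInc G k 2)) ++
     [Sym.z k 6]) := by
  simp [A1Block, A2Block]

lemma ablk_slot (k : Fin n) (m : ℕ) (hm : m < 3) (d : ℕ) (hd : d < 4)
    (j : Fin 6) (hj : (j : ℕ) = 2 * m + 1) :
    (A1Block k ++ A2Block G k)[14 + 7 * m + d]? =
      (encL G k (nthInc G k m) ++ [Sym.u k j] ++ encR G k (nthInc G k m))[d]? := by
  rw [ablk_eq]
  interval_cases m
  · have hj' : j = 1 := Fin.ext (by rw [hj]; rfl)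
    subst hj'
    generalize hS0 : encL G k (nthInc G k 0) ++ [Sym.u k 1] ++ encR G k (nthInc G k 0) = S0
    generalize hS1 : encL G k (nthInc G k 1) ++ [Sym.u k 3] ++ encR G k (nthInc G k 1) = S1
    generalize hS2 : encL G k (nthInc G k 2) ++ [Sym.u k 5] ++ encR G k (nthInc G k 2) = S2
    have h0l : S0.length = 4 := by rw [← hS0]; exact slotA_len G k _ _
    have h1l : S1.length = 4 := by rw [← hS1]; exact slotA_len G k _ _
    have h2l : S2.length = 4 := by rw [← hS2]; exact slotA_len G k _ _
    interval_cases d <;>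
      simp [List.getElem?_append, List.getElem_append, List.length_append, h0l, h1l, h2l]
  · have hj' : j = 3 := Fin.ext (by rw [hj]; rfl)
    subst hj'
    generalize hS0 : encL G k (nthInc G k 0) ++ [Sym.u k 1] ++ encR G k (nthInc G k 0) = S0
    generalize hS1 : encL G k (nthInc G k 1) ++ [Sym.u k 3] ++ encR G k (nthInc G k 1) = S1
    generalize hS2 : encL G k (nthInc G k 2) ++ [Sym.u k 5] ++ encR G k (nthInc G k 2) = S2
    have h0l : S0.length = 4 := by rw [← hS0]; exact slotA_len G k _ _
    have h1l : S1.length = 4 := by rw [← hS1]; exact slotA_len G k _ _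
    have h2l : S2.length = 4 := by rw [← hS2]; exact slotA_len G k _ _
    interval_cases d <;>
      simp [List.getElem?_append, List.getElem_append, List.length_append, h0l, h1l, h2l]
  · have hj' : j = 5 := Fin.ext (by rw [hj]; rfl)
    subst hj'
    generalize hS0 : encL G k (nthInc G k 0) ++ [Sym.u k 1] ++ encR G k (nthInc G k 0) = S0
    generalize hS1 : encL G k (nthInc G k 1) ++ [Sym.u k 3] ++ encR G k (nthInc G k 1) = S1
    generalize hS2 : encL G k (nthInc G k 2) ++ [Sym.u k 5] ++ encR G k (nthInc G k 2) = S2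
    have h0l : S0.length = 4 := by rw [← hS0]; exact slotA_len G k _ _
    have h1l : S1.length = 4 := by rw [← hS1]; exact slotA_len G k _ _
    have h2l : S2.length = 4 := by rw [← hS2]; exact slotA_len G k _ _
    interval_cases d <;>
      simp [List.getElem?_append, List.getElem_append, List.length_append, h0l, h1l, h2l]

lemma ablk_fixed (k : Fin n) (r : ℕ)
    (hr : r < 14 ∨ r = 18 ∨ r = 19 ∨ r = 20 ∨ r = 25 ∨ r = 26 ∨ r = 27 ∨ r = 32)
    {i a b : Fin n} {p : ℕ} {t : Fin 2} :
    (A1Block k ++ A2Block G k)[r]? ≠ some (.x i p) ∧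
    (A1Block k ++ A2Block G k)[r]? ≠ some (.e a b t) := by
  rw [ablk_eq]
  generalize hS0 : encL G k (nthInc G k 0) ++ [Sym.u k 1] ++ encR G k (nthInc G k 0) = S0
  generalize hS1 : encL G k (nthInc G k 1) ++ [Sym.u k 3] ++ encR G k (nthInc G k 1) = S1
  generalize hS2 : encL G k (nthInc G k 2) ++ [Sym.u k 5] ++ encR G k (nthInc G k 2) = S2
  have h0l : S0.length = 4 := by rw [← hS0]; exact slotA_len G k _ _
  have h1l : S1.length = 4 := by rw [← hS1]; exact slotA_len G k _ _
  have h2l : S2.length = 4 := by rw [← hS2]; exact slotA_len G k _ _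
  rcases hr with h | rfl | rfl | rfl | rfl | rfl | rfl | rfl
  · interval_cases r <;>
      simp [List.getElem?_append, List.getElem_append, List.length_append, h0l, h1l, h2l]
  all_goals
    simp [List.getElem?_append, List.getElem_append, List.length_append, h0l, h1l, h2l]

lemma ablk_no_xe (k : Fin n) (r : ℕ) (hr : r < 33) {i a b : Fin n} {p : ℕ} {t : Fin 2}
    (h0 : (A1Block k ++ A2Block G k)[r]? = some (.x i p))
    (h1 : (A1Block k ++ A2Block G k)[r + 1]? = some (.e a b t)) : False := by
  have hcase : (∃ m, m < 3 ∧ ∃ d, d < 4 ∧ r = 14 + 7 * m + d) ∨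
      (r < 14 ∨ r = 18 ∨ r = 19 ∨ r = 20 ∨ r = 25 ∨ r = 26 ∨ r = 27 ∨ r = 32) := by
    rcases (show r < 14 ∨ (14 ≤ r ∧ r ≤ 17) ∨ r = 18 ∨ r = 19 ∨ r = 20 ∨
        (21 ≤ r ∧ r ≤ 24) ∨ r = 25 ∨ r = 26 ∨ r = 27 ∨ (28 ≤ r ∧ r ≤ 31) ∨ r = 32
        from by omega) with h|h|h|h|h|h|h|h|h|h|h
    · right; omega
    · exact Or.inl ⟨0, by omega, r - 14, by omega, by omega⟩
    · right; omega
    · right; omega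
    · right; omega
    · exact Or.inl ⟨1, by omega, r - 21, by omega, by omega⟩
    · right; omega
    · right; omega
    · right; omega
    · exact Or.inl ⟨2, by omega, r - 28, by omega, by omega⟩
    · right; omega
  rcases hcase with ⟨m, hm, d, hd, rfl⟩ | h
  · rw [ablk_slot G k m hm d hd ⟨2 * m + 1, by omega⟩ rfl, slotA_eq] at h0
    by_cases hc : k = (nthInc G k m).1
    · rw [if_pos hc] at h0
      interval_cases d <;> simp at h0
      rw [show 14 + 7 * m + 0 + 1 = 14 + 7 * m + 1 by omega,
        ablk_slot G k m hm 1 (by omega) ⟨2 * m + 1, by omega⟩ rfl,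
        slotA_eq, if_pos hc] at h1
      simp at h1
    · rw [if_neg hc] at h0
      interval_cases d <;> simp at h0
      have := ablk_fixed G k (14 + 7 * m + 3 + 1) (by omega)
        (i := i) (a := a) (b := b) (p := p) (t := t)
      exact this.2 h1
  · exact (ablk_fixed G k r h (i:=i) (a:=a) (b:=b) (p:=p) (t:=t)).1 h0

lemma ablk_no_ex (k : Fin n) (r : ℕ) (hr : r < 33) {i a b : Fin n} {p : ℕ} {t : Fin 2}
    (h0 : (A1Block k ++ A2Block G k)[r]? = some (.e a b t))
    (h1 : (A1Block k ++ A2Block G k)[r + 1]? = some (.x i p)) : False := by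
  have hcase : (∃ m, m < 3 ∧ ∃ d, d < 4 ∧ r = 14 + 7 * m + d) ∨
      (r < 14 ∨ r = 18 ∨ r = 19 ∨ r = 20 ∨ r = 25 ∨ r = 26 ∨ r = 27 ∨ r = 32) := by
    rcases (show r < 14 ∨ (14 ≤ r ∧ r ≤ 17) ∨ r = 18 ∨ r = 19 ∨ r = 20 ∨
        (21 ≤ r ∧ r ≤ 24) ∨ r = 25 ∨ r = 26 ∨ r = 27 ∨ (28 ≤ r ∧ r ≤ 31) ∨ r = 32
        from by omega) with h|h|h|h|h|h|h|h|h|h|h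
    · right; omega
    · exact Or.inl ⟨0, by omega, r - 14, by omega, by omega⟩
    · right; omega
    · right; omega
    · right; omega
    · exact Or.inl ⟨1, by omega, r - 21, by omega, by omega⟩
    · right; omega
    · right; omega
    · right; omega
    · exact Or.inl ⟨2, by omega, r - 28, by omega, by omega⟩
    · right; omega
  rcases hcase with ⟨m, hm, d, hd, rfl⟩ | h
  · rw [ablk_slot G k m hm d hd ⟨2 * m + 1, by omega⟩ rfl, slotA_eq] at h0
    by_cases hc : k = (nthInc G k m).1
    · rw [if_pos hc] at h0
      interval_cases d <;> simp at h0
      · rw [show 14 + 7 * m + 2 + 1 = 14 + 7 * m + 3 by omega,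
          ablk_slot G k m hm 3 (by omega) ⟨2 * m + 1, by omega⟩ rfl,
          slotA_eq, if_pos hc] at h1
        simp at h1
      · have := ablk_fixed G k (14 + 7 * m + 3 + 1) (by omega)
          (i := i) (a := a) (b := b) (p := p) (t := t)
        exact this.1 h1
    · rw [if_neg hc] at h0
      interval_cases d <;> simp at h0
      · rw [show 14 + 7 * m + 0 + 1 = 14 + 7 * m + 1 by omega,
          ablk_slot G k m hm 1 (by omega) ⟨2 * m + 1, by omega⟩ rfl,
          slotA_eq, if_neg hc] at h1
        simp at h1
      · rw [show 14 + 7 * m + 1 + 1 = 14 + 7 * m + 2 by omega,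
          ablk_slot G k m hm 2 (by omega) ⟨2 * m + 1, by omega⟩ rfl,
          slotA_eq, if_neg hc] at h1
        simp at h1
  · exact (ablk_fixed G k r h (i:=i) (a:=a) (b:=b) (p:=p) (t:=t)).2 h0

lemma ablk_32 (k : Fin n) : (A1Block k ++ A2Block G k)[32]? = some (.z k 6) := by
  rw [ablk_eq]
  generalize hS0 : encL G k (nthInc G k 0) ++ [Sym.u k 1] ++ encR G k (nthInc G k 0) = S0
  generalize hS1 : encL G k (nthInc G k 1) ++ [Sym.u k 3] ++ encR G k (nthInc G k 1) = S1
  generalize hS2 : encL G k (nthInc G k 2) ++ [Sym.u k 5] ++ encR G k (nthInc G k 2) = S2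
  have h0l : S0.length = 4 := by rw [← hS0]; exact slotA_len G k _ _
  have h1l : S1.length = 4 := by rw [← hS1]; exact slotA_len G k _ _
  have h2l : S2.length = 4 := by rw [← hS2]; exact slotA_len G k _ _
  simp [List.getElem?_append, List.getElem_append, List.length_append, h0l, h1l, h2l]


lemma occ1 {e : Fin n × Fin n} (he : e ∈ edgePairs G) (q : ℕ)
    (h0 : (genomeX G)[q]? = some (Sym.x e.1 (edgeIdx G e.1 e)))
    (h1 : (genomeX G)[q + 1]? = some (Sym.e e.1 e.2 0)) :
    q = eStart G e + 1 ∨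
      ∃ m ≤ 10, m % 5 = 0 ∧ q = vStart e.1 + 3 + m ∧
        (genomeX G)[q + 2]? = some (Sym.e e.1 e.2 1) ∧
        ∃ t, (genomeX G)[q + 3]? = some (Sym.z e.1 t) := by
  rcases Nat.lt_or_ge q (18 * n) with hA | hA
  · -- region 1 : vertex blocks
    obtain ⟨i, r, hr18, rfl⟩ : ∃ (i : Fin n) (r : ℕ), r < 18 ∧ q = 18 * i.val + r :=
      ⟨⟨q / 18, by omega⟩, q % 18, by omega, (Nat.div_add_mod q 18).symm⟩
    rw [getX_vblk G i r hr18] at h0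
    have hcase : (∃ m, m < 3 ∧ ∃ d, d < 3 ∧ r = 3 + 5 * m + d) ∨ r = 0 ∨
        (r = 1 ∨ r = 2 ∨ r = 6 ∨ r = 7 ∨ r = 11 ∨ r = 12 ∨ r = 16 ∨ r = 17) := by
      rcases (show r = 0 ∨ (r = 1 ∨ r = 2 ∨ r = 6 ∨ r = 7 ∨ r = 11 ∨ r = 12 ∨ r = 16 ∨ r = 17) ∨
          (3 ≤ r ∧ r ≤ 5) ∨ (8 ≤ r ∧ r ≤ 10) ∨ (13 ≤ r ∧ r ≤ 15) from by omega)
        with h | h | h | h | h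
      · exact Or.inr (Or.inl h)
      · exact Or.inr (Or.inr h)
      · exact Or.inl ⟨0, by omega, r - 3, by omega, by omega⟩
      · exact Or.inl ⟨1, by omega, r - 8, by omega, by omega⟩
      · exact Or.inl ⟨2, by omega, r - 13, by omega, by omega⟩
    rcases hcase with ⟨m, hm, d, hd, rfl⟩ | rfl | hz
    · rw [vblk_slot G i m hm d hd, enc_eq] at h0
      by_cases hc : i = (nthInc G i m).1
      · rw [if_pos hc] at h0
        interval_cases d <;> simp at h0
        rw [show 18 * i.val + (3 + 5 * m + 0) + 1 = 18 * i.val + (3 + 5 * m + 1) by omega,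
          getX_vblk G i _ (by omega), vblk_slot G i m hm 1 (by omega), enc_eq, if_pos hc] at h1
        simp at h1
        right
        refine ⟨5 * m, by omega, by omega, ?_, ?_, ?_⟩
        · have hv : vStart e.1 = 18 * i.val := by rw [← h0.1]; rfl
          omega
        · rw [show 18 * i.val + (3 + 5 * m + 0) + 2 = 18 * i.val + (3 + 5 * m + 2) by omega,
            getX_vblk G i _ (by omega), vblk_slot G i m hm 2 (by omega), enc_eq, if_pos hc]
          simp [h1.1, h1.2]
        · obtain ⟨t, ht⟩ := vblk_z G i (6 + 5 * m) (by omega)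
          refine ⟨t, ?_⟩
          rw [show 18 * i.val + (3 + 5 * m + 0) + 3 = 18 * i.val + (6 + 5 * m) by omega,
            getX_vblk G i _ (by omega), ht, h0.1]
      · rw [if_neg hc] at h0
        interval_cases d <;> simp at h0
        obtain ⟨t, ht⟩ := vblk_z G i (6 + 5 * m) (by omega)
        rw [show 18 * i.val + (3 + 5 * m + 2) + 1 = 18 * i.val + (6 + 5 * m) by omega,
          getX_vblk G i _ (by omega), ht] at h1
        simp at h1
    · rw [vblk_s] at h0; simp at h0
    · obtain ⟨t, ht⟩ := vblk_z G i r hz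
      rw [ht] at h0; simp at h0
  · rcases Nat.lt_or_ge q (18 * n + 5 * (edgePairs G).length) with hB | hB
    · -- region 2 : edge blocks
      obtain ⟨k, r, hk, hr5, rfl⟩ :
          ∃ k r, k < (edgePairs G).length ∧ r < 5 ∧ q = 18 * n + 5 * k + r :=
        ⟨(q - 18 * n) / 5, (q - 18 * n) % 5, by omega, by omega, by omega⟩
      rw [getX_eblk G hk r hr5] at h0
      interval_cases r <;> simp [edgeBlockX] at h0
      · -- r = 1
        rw [show 18 * n + 5 * k + 1 + 1 = 18 * n + 5 * k + 2 by omega,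
          getX_eblk G hk 2 (by omega)] at h1
        simp [edgeBlockX] at h1
        have hEe : (edgePairs G)[k] = e := Prod.ext h1.1 h1.2
        have hidx : k = (edgePairs G).idxOf e :=
          indexOf_of_getElem?' (nodup_edgePairs G)
            (by rw [List.getElem?_eq_getElem hk, hEe])
        left
        rw [eStart_eq]; omega
      · -- r = 4
        rw [show 18 * n + 5 * k + 4 + 1 = 18 * n + 5 * (k + 1) + 0 by omega] at h1
        by_cases hk1 : k + 1 < (edgePairs G).length
        · rw [getX_eblk G hk1 0 (by omega)] at h1
          simp [edgeBlockX] at h1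
        · rw [getX, if_neg (by omega), if_neg (by omega)] at h1
          have hd0 : (18 * n + 5 * (k + 1) + 0 - (18 * n + 5 * (edgePairs G).length)) / 33
              = 0 := by omega
          have hm0 : (18 * n + 5 * (k + 1) + 0 - (18 * n + 5 * (edgePairs G).length)) % 33
              = 0 := by omega
          rw [hd0, hm0] at h1
          rcases hF : (List.finRange n)[0]? with _ | i
          · rw [hF] at h1; simp at h1
          · rw [hF] at h1
            simp only [Option.bind_some] at h1
            exact absurd h1 (ablk_fixed G i 0 (by omega)
              (i := e.1) (a := e.1) (b := e.2) (p := edgeIdx G e.1 e) (t := 0)).2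
    · -- region 3 : A blocks
      rw [getX, if_neg (by omega), if_neg (by omega)] at h0
      rcases hF : (List.finRange n)[(q - (18 * n + 5 * (edgePairs G).length)) / 33]? with _ | i
      · rw [hF] at h0; simp at h0
      · rw [hF] at h0
        simp only [Option.bind_some] at h0
        have hin : (q - (18 * n + 5 * (edgePairs G).length)) / 33 < n := by
          by_contra hcon
          rw [List.getElem?_eq_none (by simpa using hcon)] at hF
          exact Option.noConfusion rfl (heq_of_eq hF)
        have hiv : i.val = (q - (18 * n + 5 * (edgePairs G).length)) / 33 := by
          rw [finRange_getElem? hin] at hF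
          rw [← Option.some_inj.1 hF]
        rcases Nat.lt_or_ge ((q - (18 * n + 5 * (edgePairs G).length)) % 33) 32 with h32 | h32
        · rw [show q + 1 = 18 * n + 5 * (edgePairs G).length + 33 * i.val +
              ((q - (18 * n + 5 * (edgePairs G).length)) % 33 + 1) by omega,
            getX_ablk G i _ (by omega)] at h1
          exact (ablk_no_xe G i _ (by omega) h0 h1).elim
        · have h32' : (q - (18 * n + 5 * (edgePairs G).length)) % 33 = 32 := by omega
          rw [h32', ablk_32 G i] at h0
          simp at h0

lemma occ2 {e : Fin n × Fin n} (he : e ∈ edgePairs G) (q : ℕ)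
    (h0 : (genomeX G)[q]? = some (Sym.e e.1 e.2 1))
    (h1 : (genomeX G)[q + 1]? = some (Sym.x e.2 (edgeIdx G e.2 e))) :
    q = eStart G e + 3 ∨ ∃ m ≤ 10, m % 5 = 0 ∧ q = vStart e.2 + 4 + m := by
  rcases Nat.lt_or_ge q (18 * n) with hA | hA
  · obtain ⟨i, r, hr18, rfl⟩ : ∃ (i : Fin n) (r : ℕ), r < 18 ∧ q = 18 * i.val + r :=
      ⟨⟨q / 18, by omega⟩, q % 18, by omega, (Nat.div_add_mod q 18).symm⟩
    rw [getX_vblk G i r hr18] at h0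
    have hcase : (∃ m, m < 3 ∧ ∃ d, d < 3 ∧ r = 3 + 5 * m + d) ∨ r = 0 ∨
        (r = 1 ∨ r = 2 ∨ r = 6 ∨ r = 7 ∨ r = 11 ∨ r = 12 ∨ r = 16 ∨ r = 17) := by
      rcases (show r = 0 ∨ (r = 1 ∨ r = 2 ∨ r = 6 ∨ r = 7 ∨ r = 11 ∨ r = 12 ∨ r = 16 ∨ r = 17) ∨
          (3 ≤ r ∧ r ≤ 5) ∨ (8 ≤ r ∧ r ≤ 10) ∨ (13 ≤ r ∧ r ≤ 15) from by omega)
        with h | h | h | h | h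
      · exact Or.inr (Or.inl h)
      · exact Or.inr (Or.inr h)
      · exact Or.inl ⟨0, by omega, r - 3, by omega, by omega⟩
      · exact Or.inl ⟨1, by omega, r - 8, by omega, by omega⟩
      · exact Or.inl ⟨2, by omega, r - 13, by omega, by omega⟩
    rcases hcase with ⟨m, hm, d, hd, rfl⟩ | rfl | hz
    · rw [vblk_slot G i m hm d hd, enc_eq] at h0
      by_cases hc : i = (nthInc G i m).1
      · rw [if_pos hc] at h0
        interval_cases d <;> simp at h0
        -- d = 2 survives, next char is a z
        obtain ⟨t, ht⟩ := vblk_z G i (6 + 5 * m) (by omega)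
        rw [show 18 * i.val + (3 + 5 * m + 2) + 1 = 18 * i.val + (6 + 5 * m) by omega,
          getX_vblk G i _ (by omega), ht] at h1
        simp at h1
      · rw [if_neg hc] at h0
        interval_cases d <;> simp at h0
        -- d = 1 survives
        rw [show 18 * i.val + (3 + 5 * m + 1) + 1 = 18 * i.val + (3 + 5 * m + 2) by omega,
          getX_vblk G i _ (by omega), vblk_slot G i m hm 2 (by omega), enc_eq, if_neg hc] at h1
        simp at h1
        right
        refine ⟨5 * m, by omega, by omega, ?_⟩
        have hv : vStart e.2 = 18 * i.val := by rw [← h1.1]; rfl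
        omega
    · rw [vblk_s] at h0; simp at h0
    · obtain ⟨t, ht⟩ := vblk_z G i r hz
      rw [ht] at h0; simp at h0
  · rcases Nat.lt_or_ge q (18 * n + 5 * (edgePairs G).length) with hB | hB
    · obtain ⟨k, r, hk, hr5, rfl⟩ :
          ∃ k r, k < (edgePairs G).length ∧ r < 5 ∧ q = 18 * n + 5 * k + r :=
        ⟨(q - 18 * n) / 5, (q - 18 * n) % 5, by omega, by omega, by omega⟩
      rw [getX_eblk G hk r hr5] at h0
      interval_cases r <;> simp [edgeBlockX] at h0
      -- r = 3 survives
      have hEe : (edgePairs G)[k] = e := Prod.ext h0.1 h0.2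
      have hidx : k = (edgePairs G).idxOf e :=
        indexOf_of_getElem?' (nodup_edgePairs G)
          (by rw [List.getElem?_eq_getElem hk, hEe])
      left
      rw [eStart_eq]; omega
    · rw [getX, if_neg (by omega), if_neg (by omega)] at h0
      rcases hF : (List.finRange n)[(q - (18 * n + 5 * (edgePairs G).length)) / 33]? with _ | i
      · rw [hF] at h0; simp at h0
      · rw [hF] at h0
        simp only [Option.bind_some] at h0
        have hin : (q - (18 * n + 5 * (edgePairs G).length)) / 33 < n := by
          by_contra hcon
          rw [List.getElem?_eq_none (by simpa using hcon)] at hF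
          exact Option.noConfusion rfl (heq_of_eq hF)
        have hiv : i.val = (q - (18 * n + 5 * (edgePairs G).length)) / 33 := by
          rw [finRange_getElem? hin] at hF
          rw [← Option.some_inj.1 hF]
        rcases Nat.lt_or_ge ((q - (18 * n + 5 * (edgePairs G).length)) % 33) 32 with h32 | h32
        · rw [show q + 1 = 18 * n + 5 * (edgePairs G).length + 33 * i.val +
              ((q - (18 * n + 5 * (edgePairs G).length)) % 33 + 1) by omega,
            getX_ablk G i _ (by omega)] at h1
          exact (ablk_no_ex G i _ (by omega) h0 h1).elim
        · have h32' : (q - (18 * n + 5 * (edgePairs G).length)) % 33 = 32 := by omega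
          rw [h32', ablk_32 G i] at h0
          simp at h0

end MLA

open MLA in
/-- For every edge `{v_i, v_j}` of a cubic graph `G` and every
feasible labeling of `(X, Y)`, if no substring of `B_{X-VE}(e_{i,j})` is
labeled by a duplication coming from `B_{X-VE}(v_i)` or from `B_{X-VE}(v_j)`,
then the total cost of the operations labeling the unmatched characters of
`B_{X-VE}(e_{i,j})` is at least 3. -/
theorem edgeBlock_cost_three_lower_bound {n : ℕ} (G : SimpleGraph (Fin n))
    [DecidableRel G.Adj] (hcubic : ∀ v : Fin n, G.degree v = 3)
    (L : Finset Op) (hL : IsLabeling (genomeX G) (UnmatchedX G) L)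
    (hfeas : Feasible L) (e : Fin n × Fin n) (he : e ∈ edgePairs G)
    (hnodup : ∀ o ∈ restrict L (eStart G e) (eStart G e + 5), ∀ s, o.src = some s →
      ¬ (vStart e.1 ≤ s ∧ s + o.len ≤ vStart e.1 + 18) ∧
      ¬ (vStart e.2 ≤ s ∧ s + o.len ≤ vStart e.2 + 18)) :
    3 ≤ blockCost L (eStart G e) (eStart G e + 5) := by
  classical
  have c1 : (genomeX G)[eStart G e + 1]? = some (Sym.x e.1 (edgeIdx G e.1 e)) := by
    rw [getX_estart G he 1 (by omega)]; rfl
  have c2 : (genomeX G)[eStart G e + 2]? = some (Sym.e e.1 e.2 0) := by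
    rw [getX_estart G he 2 (by omega)]; rfl
  have c3 : (genomeX G)[eStart G e + 3]? = some (Sym.e e.1 e.2 1) := by
    rw [getX_estart G he 3 (by omega)]; rfl
  have c4 : (genomeX G)[eStart G e + 4]? = some (Sym.x e.2 (edgeIdx G e.2 e)) := by
    rw [getX_estart G he 4 (by omega)]; rfl
  have dupA : ∀ o ∈ restrict L (eStart G e) (eStart G e + 5),
      o.start = eStart G e + 1 → 2 ≤ o.len → o.len ≤ 4 → ¬ o.src = none → False := by
    intro o hoR hst hl2 hl4 hsome
    obtain ⟨s, hs⟩ : ∃ s, o.src = some s := Option.ne_none_iff_exists'.1 hsome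
    have hoL : o ∈ L := (Finset.mem_filter.1 hoR).1
    obtain ⟨hlen1, hbound, hsrc⟩ := hL.valid o hoL
    obtain ⟨hne, hsle, hmatch⟩ := hsrc s hs
    have h0 : (genomeX G)[s]? = some (Sym.x e.1 (edgeIdx G e.1 e)) := by
      have h := hmatch 0 (by omega)
      rw [Nat.add_zero, Nat.add_zero, hst] at h
      rw [h, c1]
    have h1 : (genomeX G)[s + 1]? = some (Sym.e e.1 e.2 0) := by
      have h := hmatch 1 (by omega)
      rw [hst, show eStart G e + 1 + 1 = eStart G e + 2 by omega] at h
      rw [h, c2]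
    rcases occ1 G he s h0 h1 with heq | ⟨m, hm10, hm5, hqs, -, -⟩
    · exact hne (by omega)
    · exact (hnodup o hoR s hs).1 ⟨by omega, by omega⟩
  have dupB : ∀ o ∈ restrict L (eStart G e) (eStart G e + 5),
      o.start = eStart G e + 2 → o.len = 3 → ¬ o.src = none → False := by
    intro o hoR hst hl3 hsome
    obtain ⟨s, hs⟩ : ∃ s, o.src = some s := Option.ne_none_iff_exists'.1 hsome
    have hoL : o ∈ L := (Finset.mem_filter.1 hoR).1
    obtain ⟨hlen1, hbound, hsrc⟩ := hL.valid o hoL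
    obtain ⟨hne, hsle, hmatch⟩ := hsrc s hs
    have h0 : (genomeX G)[s + 1]? = some (Sym.e e.1 e.2 1) := by
      have h := hmatch 1 (by omega)
      rw [hst, show eStart G e + 2 + 1 = eStart G e + 3 by omega] at h
      rw [h, c3]
    have h1 : (genomeX G)[s + 1 + 1]? = some (Sym.x e.2 (edgeIdx G e.2 e)) := by
      have h := hmatch 2 (by omega)
      rw [hst, show eStart G e + 2 + 2 = eStart G e + 4 by omega,
        show s + 2 = s + 1 + 1 by omega] at h
      rw [h, c4]
    rcases occ2 G he (s + 1) h0 h1 with heq | ⟨m, hm10, hm5, hqs⟩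
    · exact hne (by omega)
    · exact (hnodup o hoR s hs).2 ⟨by omega, by omega⟩
  by_contra hlt
  push_neg at hlt
  have hbc : ∑ o ∈ restrict L (eStart G e) (eStart G e + 5), o.cost ≤ 2 := by
    have : blockCost L (eStart G e) (eStart G e + 5)
        = ∑ o ∈ restrict L (eStart G e) (eStart G e + 5), o.cost := rfl
    omega
  have hcost1 : ∀ o ∈ restrict L (eStart G e) (eStart G e + 5), 1 ≤ o.cost := by
    intro o hoR
    have hoL : o ∈ L := (Finset.mem_filter.1 hoR).1
    have hlen1 := (hL.valid o hoL).1
    unfold Op.cost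
    split <;> omega
  have hcont : ∀ o ∈ restrict L (eStart G e) (eStart G e + 5),
      eStart G e + 1 ≤ o.start ∧ o.start + o.len ≤ eStart G e + 5 := by
    intro o hoR
    obtain ⟨hoL, p, hpIco, hcova, hcovb⟩ :
        o ∈ L ∧ ∃ p, p ∈ Finset.Ico (eStart G e) (eStart G e + 5) ∧
          o.start ≤ p ∧ p < o.start + o.len := by
      have h := Finset.mem_filter.1 hoR
      exact ⟨h.1, h.2⟩
    rw [Finset.mem_Ico] at hpIco
    constructor
    · by_contra hc
      exact matched_eStart G he (hL.unmatched o hoL (eStart G e) ⟨by omega, by omega⟩)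
    · by_contra hc
      exact matched_eEnd G he (hL.unmatched o hoL (eStart G e + 5) ⟨by omega, by omega⟩)
  have hcov4 : ∀ p, eStart G e + 1 ≤ p → p < eStart G e + 5 →
      ∃ o ∈ restrict L (eStart G e) (eStart G e + 5), o.start ≤ p ∧ p < o.start + o.len := by
    intro p hp1 hp2
    have hu : UnmatchedX G p := by
      have hp : p = eStart G e + (p - eStart G e) := by omega
      rw [hp]
      exact unmatched_edge G he _ (by omega) (by omega)
    obtain ⟨o, hoL, hcov⟩ := hL.covers p hu
    exact ⟨o, Finset.mem_filter.2 ⟨hoL, ⟨p, Finset.mem_Ico.2 ⟨by omega, by omega⟩, hcov⟩⟩,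
      hcov.1, hcov.2⟩
  obtain ⟨o1, ho1R, hc1a, hc1b⟩ := hcov4 (eStart G e + 1) (by omega) (by omega)
  obtain ⟨o2, ho2R, hc2a, hc2b⟩ := hcov4 (eStart G e + 4) (by omega) (by omega)
  have h1s : o1.start = eStart G e + 1 := by have := (hcont o1 ho1R).1; omega
  have h2e : o2.start + o2.len = eStart G e + 5 := by have := (hcont o2 ho2R).2; omega
  have ho1L : o1 ∈ L := (Finset.mem_filter.1 ho1R).1
  have ho2L : o2 ∈ L := (Finset.mem_filter.1 ho2R).1
  have hlen11 := (hL.valid o1 ho1L).1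
  have hlen21 := (hL.valid o2 ho2L).1
  have hb1 := (hcont o1 ho1R).2
  by_cases h12 : o1 = o2
  · have hl4 : o1.len = 4 := by rw [← h12] at h2e; omega
    have hco : o1.cost ≤ 2 := by
      have := Finset.single_le_sum (f := Op.cost) (fun o _ => Nat.zero_le _) ho1R
      omega
    by_cases hn : o1.src = none
    · have : o1.cost = o1.len := by unfold Op.cost; rw [if_pos hn]
      omega
    · exact dupA o1 ho1R h1s (by omega) (by omega) hn
  · have hsum2 : o1.cost + o2.cost ≤ 2 := by
      have hsub : ({o1, o2} : Finset Op) ⊆ restrict L (eStart G e) (eStart G e + 5) := by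
        intro x hx
        rcases Finset.mem_insert.1 hx with rfl | hx
        · exact ho1R
        · rw [Finset.mem_singleton.1 hx]; exact ho2R
      have hss := Finset.sum_le_sum_of_subset (f := Op.cost) hsub
      rw [Finset.sum_pair h12] at hss
      omega
    have hco1 : o1.cost = 1 := by
      have := hcost1 o1 ho1R; have := hcost1 o2 ho2R; omega
    have hco2 : o2.cost = 1 := by
      have := hcost1 o1 ho1R; have := hcost1 o2 ho2R; omega
    have hgap : o2.start = eStart G e + 1 + o1.len := by
      rcases Nat.lt_trichotomy o2.start (eStart G e + 1 + o1.len) with hlt' | heq' | hgt'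
      · have hcv1 : o1.covers (eStart G e + o1.len) := ⟨by omega, by omega⟩
        have hcv2 : o2.covers (eStart G e + o1.len) := ⟨by omega, by omega⟩
        exact absurd (hL.disjoint o1 ho1L o2 ho2L _ hcv1 hcv2) h12
      · exact heq'
      · obtain ⟨o3, ho3R, hcv3a, hcv3b⟩ :=
          hcov4 (eStart G e + 1 + o1.len) (by omega) (by omega)
        have h31 : o3 ≠ o1 := by
          intro h; rw [h] at hcv3b; omega
        have h32 : o3 ≠ o2 := by
          intro h; rw [h] at hcv3a; omega
        have hsub3 : ({o1, o2, o3} : Finset Op) ⊆ restrict L (eStart G e) (eStart G e + 5) := by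
          intro x hx
          rcases Finset.mem_insert.1 hx with rfl | hx
          · exact ho1R
          rcases Finset.mem_insert.1 hx with rfl | hx
          · exact ho2R
          rw [Finset.mem_singleton.1 hx]; exact ho3R
        have hcard : ({o1, o2, o3} : Finset Op).card = 3 := by
          rw [Finset.card_insert_of_notMem (by simp [h12, Ne.symm h31]),
            Finset.card_insert_of_notMem (by simp [Ne.symm h32]),
            Finset.card_singleton]
        have h3le : 3 ≤ ∑ o ∈ restrict L (eStart G e) (eStart G e + 5), o.cost := by
          calc 3 = ∑ _o ∈ ({o1, o2, o3} : Finset Op), 1 := by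
                rw [Finset.sum_const, hcard]; simp
            _ ≤ ∑ o ∈ ({o1, o2, o3} : Finset Op), o.cost :=
                Finset.sum_le_sum (fun o ho => hcost1 o (hsub3 ho))
            _ ≤ _ := Finset.sum_le_sum_of_subset hsub3
        omega
    have hlens : o1.len = 1 ∨ o1.len = 2 ∨ o1.len = 3 := by omega
    rcases hlens with hl1 | hl1 | hl1
    · have hst2 : o2.start = eStart G e + 2 := by omega
      have hlen2 : o2.len = 3 := by omega
      have hn2 : ¬ o2.src = none := by
        intro hn
        have : o2.cost = o2.len := by unfold Op.cost; rw [if_pos hn]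
        omega
      exact dupB o2 ho2R hst2 hlen2 hn2
    · have hn1 : ¬ o1.src = none := by
        intro hn
        have : o1.cost = o1.len := by unfold Op.cost; rw [if_pos hn]
        omega
      exact dupA o1 ho1R h1s (by omega) (by omega) hn1
    · have hn1 : ¬ o1.src = none := by
        intro hn
        have : o1.cost = o1.len := by unfold Op.cost; rw [if_pos hn]
        omega
      exact dupA o1 ho1R h1s (by omega) (by omega) hn1
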